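/- Let F be a field, let R be a nonzero commutative F-algebra, and let f(x) ∈ R[x] be a monic polynomial of degree n. For any integer k ≥ 0, the F-vector-space dimension of the universal factor ring R_{f,k} satisfies dim_F(R_{f,k}) = C(n,k) · dim_F(R), where C(n,k) is the binomial coefficient (which is 0 when k > n). -/

import Mathlib

open Polynomial

/-- The generic monic polynomial `g(x) = x^k + b_{k-1} x^{k-1} + ⋯ + b_0` of degree `k`,
with coefficients the indeterminates `b_j = MvPolynomial.X j` over `R`. -/
noncomputable abbrev genericMonic (R : Type*) [CommRing R] (k : ℕ) :
    Polynomial (MvPolynomial (Fin k) R) :=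
  Polynomial.X ^ k + ∑ j : Fin k, Polynomial.C (MvPolynomial.X j) * Polynomial.X ^ (j : ℕ)

/-- The ideal `I` of `R[b_0,…,b_{k-1}]` generated by the coefficients of the remainder
upon long division of (the image of) `f` by the generic monic polynomial of degree `k`. -/
noncomputable abbrev univRemainderIdeal (R : Type*) [CommRing R] (f : Polynomial R) (k : ℕ) :
    Ideal (MvPolynomial (Fin k) R) :=
  Ideal.span (Set.range fun i : ℕ =>
    ((f.map (algebraMap R (MvPolynomial (Fin k) R))) %ₘ genericMonic R k).coeff i)

/-- `R_{f,k}`: the universal `R`-algebra adjunction of a monic degree-`k` factor of `f`. -/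
noncomputable abbrev UniversalFactorRing (R : Type*) [CommRing R] (f : Polynomial R) (k : ℕ) :=
  MvPolynomial (Fin k) R ⧸ univRemainderIdeal R f k

lemma monic_expand {S : Type*} [CommRing S] {q : S[X]} {m : ℕ} (hq : q.Monic)
    (hd : q.natDegree = m) :
    q = X ^ m + ∑ j : Fin m, C (q.coeff (j : ℕ)) * X ^ (j : ℕ) := by
  ext i
  have hcoeff : ∀ (j : Fin m), (j : ℕ) ≠ i → (C (q.coeff (j : ℕ)) * X ^ (j : ℕ)).coeff i = 0 := by
    intro j hj
    rw [coeff_C_mul, coeff_X_pow, if_neg (fun h => hj h.symm), mul_zero]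
  rcases lt_trichotomy i m with hi | rfl | hi
  · simp only [coeff_add, coeff_X_pow, if_neg hi.ne, zero_add, finset_sum_coeff]
    rw [Finset.sum_eq_single (⟨i, hi⟩ : Fin m)]
    · simp
    · intro j _ hj
      exact hcoeff j (by intro h; apply hj; exact Fin.ext (by simpa using h))
    · simp
  · have h1 : q.coeff i = 1 := by rw [← hd]; exact hq.coeff_natDegree
    rw [h1, coeff_add, coeff_X_pow, if_pos rfl, finset_sum_coeff,
      Finset.sum_congr rfl (fun j _ => hcoeff j j.2.ne), Finset.sum_const_zero, add_zero]
  · have h1 : q.coeff i = 0 := coeff_eq_zero_of_natDegree_lt (hd ▸ hi)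
    rw [h1, coeff_add, coeff_X_pow, if_neg hi.ne', finset_sum_coeff,
      Finset.sum_congr rfl (fun j _ => hcoeff j (j.2.trans hi).ne), Finset.sum_const_zero,
      add_zero]

lemma genericMonic_sum_degree_lt (R : Type*) [CommRing R] (k : ℕ) :
    (∑ j : Fin k, Polynomial.C (MvPolynomial.X (R := R) j) * Polynomial.X ^ (j : ℕ)).degree
      < (k : WithBot ℕ) := by
  apply lt_of_le_of_lt (degree_sum_le _ _)
  rw [Finset.sup_lt_iff (by exact_mod_cast WithBot.bot_lt_coe k)]
  intro j _
  exact lt_of_le_of_lt (degree_C_mul_X_pow_le _ _) (by exact_mod_cast j.2)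

lemma genericMonic_monic (R : Type*) [CommRing R] (k : ℕ) :
    (genericMonic R k).Monic :=
  monic_X_pow_add (genericMonic_sum_degree_lt R k)

lemma genericMonic_degree (R : Type*) [CommRing R] [Nontrivial R] (k : ℕ) :
    (genericMonic R k).degree = k := by
  rw [genericMonic, degree_add_eq_left_of_degree_lt, degree_X_pow]
  rw [degree_X_pow]
  exact genericMonic_sum_degree_lt R k

lemma genericMonic_natDegree (R : Type*) [CommRing R] [Nontrivial R] (k : ℕ) :
    (genericMonic R k).natDegree = k :=
  natDegree_eq_of_degree_eq_some (genericMonic_degree R k)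

/-- mapping the generic monic along a ring hom out of the polynomial ring. -/
lemma genericMonic_map {R : Type*} [CommRing R] {k : ℕ} {S : Type*} [CommRing S]
    (φ : MvPolynomial (Fin k) R →+* S) :
    (genericMonic R k).map φ
      = X ^ k + ∑ j : Fin k, C (φ (MvPolynomial.X j)) * X ^ (j : ℕ) := by
  simp [genericMonic, Polynomial.map_sum]

section
variable {R : Type*} [CommRing R] (f : R[X]) (k : ℕ)

lemma univ_remainder_map_zero :
    ((f.map (algebraMap R (MvPolynomial (Fin k) R)) %ₘ genericMonic R k).map
      (Ideal.Quotient.mk (univRemainderIdeal R f k))) = 0 := by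
  ext i
  rw [coeff_map, coeff_zero, Ideal.Quotient.eq_zero_iff_mem]
  exact Ideal.subset_span ⟨i, rfl⟩

lemma univ_dvd :
    (genericMonic R k).map (Ideal.Quotient.mk (univRemainderIdeal R f k))
      ∣ f.map (algebraMap R (UniversalFactorRing R f k)) := by
  set A := MvPolynomial (Fin k) R
  set I := univRemainderIdeal R f k
  set g := genericMonic R k
  set fA := f.map (algebraMap R A) with hfA
  have h1 : fA %ₘ g + g * (fA /ₘ g) = fA := modByMonic_add_div fA g
  have h2 : f.map (algebraMap R (UniversalFactorRing R f k)) = fA.map (Ideal.Quotient.mk I) := by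
    rw [hfA, Polynomial.map_map, Ideal.Quotient.mk_comp_algebraMap]
  have h3 : fA.map (Ideal.Quotient.mk I)
      = (g.map (Ideal.Quotient.mk I)) * ((fA /ₘ g).map (Ideal.Quotient.mk I)) := by
    conv_lhs => rw [← h1]
    rw [Polynomial.map_add, Polynomial.map_mul, univ_remainder_map_zero, zero_add]
  rw [h2, h3]
  exact ⟨_, rfl⟩

end

lemma genericMonic_coeff (R : Type*) [CommRing R] (k : ℕ) (j : Fin k) :
    (genericMonic R k).coeff (j : ℕ) = MvPolynomial.X j := by
  rw [genericMonic, coeff_add, coeff_X_pow, if_neg j.2.ne, zero_add, finset_sum_coeff,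
    Finset.sum_eq_single j]
  · simp
  · intro i _ hij
    rw [coeff_C_mul, coeff_X_pow, if_neg (fun h => hij (Fin.ext (by simpa using h.symm))), mul_zero]
  · simp

section Step
variable {R : Type*} [CommRing R] [Nontrivial R]

set_option maxHeartbeats 1000000 in
theorem step_equiv (F : Type*) [Field F] [Algebra F R]
    (f : R[X]) (hf : f.Monic) (hn : 1 ≤ f.natDegree) (k : ℕ)
    (hT : Nontrivial (UniversalFactorRing (AdjoinRoot f)
      (f.map (algebraMap R (AdjoinRoot f)) /ₘ (X - C (AdjoinRoot.root f))) k)) :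
    Nontrivial (UniversalFactorRing R f (k+1)) ∧
    Nonempty ((AdjoinRoot ((genericMonic R (k+1)).map
        (Ideal.Quotient.mk (univRemainderIdeal R f (k+1))))) ≃ₐ[F]
      (UniversalFactorRing (AdjoinRoot f)
        (f.map (algebraMap R (AdjoinRoot f)) /ₘ (X - C (AdjoinRoot.root f))) k)) := by
  classical
  -- Notation
  set R' := AdjoinRoot f with hR'
  set α : R' := AdjoinRoot.root f with hα
  set fR' := f.map (algebraMap R R') with hfR'
  set f' := fR' /ₘ (X - C α) with hf'
  set I := univRemainderIdeal R f (k+1) with hIdef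
  set mkI := Ideal.Quotient.mk I with hmkI
  set gQ := (genericMonic R (k+1)).map mkI with hgQ
  set ofg := AdjoinRoot.of gQ with hofg
  set gL := gQ.map ofg with hgL
  set ξ := AdjoinRoot.root gQ with hξdef
  set I' := univRemainderIdeal R' f' k with hI'def
  set mkI' := Ideal.Quotient.mk I' with hmkI'
  set g'T := (genericMonic R' k).map mkI' with hg'T
  set T := UniversalFactorRing R' f' k with hTdef
  set αT := algebraMap R' T α with hαT
  set gT := (X - C αT) * g'T with hgT
  -- Basic facts
  haveI hR'nt : Nontrivial R' := by
    refine Ideal.Quotient.nontrivial_iff.mpr ?_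
    rw [Ne, Ideal.span_singleton_eq_top]
    intro hu
    rw [hf.isUnit_iff] at hu
    rw [hu, natDegree_one] at hn
    omega
  have hroot_fR' : fR'.IsRoot α := by
    rw [IsRoot, hfR', eval_map, AdjoinRoot.algebraMap_eq]
    exact AdjoinRoot.eval₂_root f
  have hfact : (X - C α) * f' = fR' := mul_divByMonic_eq_iff_isRoot.2 hroot_fR'
  have hfR'mon : fR'.Monic := hf.map _
  have hf'mon : f'.Monic := (monic_X_sub_C α).of_mul_monic_left (hfact.symm ▸ hfR'mon)
  have hgTmon : gT.Monic := (monic_X_sub_C αT).mul (genericMonic_monic R' k |>.map _)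
  haveI hTnt : Nontrivial T := hT
  have hg'Tdeg : g'T.natDegree = k := by
    rw [hg'T, (genericMonic_monic R' k).natDegree_map, genericMonic_natDegree]
  have hgTdeg : gT.natDegree = k + 1 := by
    rw [hgT, (monic_X_sub_C αT).natDegree_mul ((genericMonic_monic R' k).map _), natDegree_X_sub_C,
      hg'Tdeg, add_comm]
  -- the map χ0 : R[b] → T
  set χ0 := MvPolynomial.eval₂Hom (algebraMap R T) (fun j : Fin (k+1) => gT.coeff j) with hχ0
  have hχ0X : ∀ j : Fin (k+1), χ0 (MvPolynomial.X j) = gT.coeff j := fun j => by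
    rw [hχ0, MvPolynomial.eval₂Hom_X']
  have hχ0C : ∀ r : R, χ0 (MvPolynomial.C r) = algebraMap R T r := fun r => by
    rw [hχ0, MvPolynomial.eval₂Hom_C]
  have hmapgT : (genericMonic R (k+1)).map χ0 = gT := by
    rw [genericMonic_map χ0]
    conv_rhs => rw [monic_expand hgTmon hgTdeg]
    congr 1
    exact Finset.sum_congr rfl fun j _ => by rw [hχ0X]
  have halgRT : (algebraMap R T) = (algebraMap R' T).comp (algebraMap R R') :=
    IsScalarTower.algebraMap_eq R R' T
  have hdvdT : gT ∣ f.map (algebraMap R T) := by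
    obtain ⟨c, hc⟩ := univ_dvd f' k
    have h1 : f.map (algebraMap R T) = fR'.map (algebraMap R' T) := by
      rw [hfR', Polynomial.map_map, ← halgRT]
    refine ⟨c, ?_⟩
    rw [h1, ← hfact, Polynomial.map_mul, Polynomial.map_sub, map_X, map_C, hc, hgT, hαT]
    ring
  have hkerχ0 : I ≤ RingHom.ker χ0 := by
    have hrem : ((f.map (algebraMap R (MvPolynomial (Fin (k+1)) R)) %ₘ genericMonic R (k+1)).map
        χ0) = 0 := by
      rw [map_modByMonic χ0 (genericMonic_monic R (k+1)), hmapgT]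
      have h2 : (f.map (algebraMap R (MvPolynomial (Fin (k+1)) R))).map χ0
          = f.map (algebraMap R T) := by
        rw [Polynomial.map_map]
        congr 1
        exact RingHom.ext fun r => hχ0C r
      rw [h2, (modByMonic_eq_zero_iff_dvd hgTmon).2 hdvdT]
    rw [hIdef]
    refine Ideal.span_le.2 ?_
    rintro x ⟨i, rfl⟩
    have := congrArg (fun p => p.coeff i) hrem
    simpa [coeff_map] using this
  set χ : UniversalFactorRing R f (k+1) →+* T :=
    Ideal.Quotient.lift I χ0 (fun a ha => hkerχ0 ha) with hχdef
  have hχmk : ∀ a, χ (mkI a) = χ0 a := fun a => Ideal.Quotient.lift_mk I _ _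
  haveI hQnt : Nontrivial (UniversalFactorRing R f (k+1)) := by
    refine ⟨⟨0, 1, fun h => ?_⟩⟩
    have h2 : (0 : T) = 1 := by rw [← map_zero χ, ← map_one χ, h]
    exact zero_ne_one h2
  have hgQmon : gQ.Monic := (genericMonic_monic R (k+1)).map _
  have hgQdeg : gQ.natDegree = k+1 := by
    rw [hgQ, (genericMonic_monic R (k+1)).natDegree_map, genericMonic_natDegree]
  haveI hLnt : Nontrivial (AdjoinRoot gQ) := by
    refine Ideal.Quotient.nontrivial_iff.mpr ?_
    rw [Ne, Ideal.span_singleton_eq_top]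
    intro hu
    rw [hgQmon.isUnit_iff] at hu
    have h3 := congrArg natDegree hu
    rw [hgQdeg, natDegree_one] at h3
    omega
  -- φ : L → T
  have hgQχ : gQ.map χ = gT := by
    rw [hgQ, Polynomial.map_map]
    have h4 : χ.comp mkI = χ0 := RingHom.ext fun a => hχmk a
    rw [h4, hmapgT]
  have hevalgT : gT.eval αT = 0 := by
    rw [hgT, eval_mul, eval_sub, eval_X, eval_C, sub_self, zero_mul]
  set φ : AdjoinRoot gQ →+* T := AdjoinRoot.lift χ αT (by
    rw [eval₂_eq_eval_map, hgQχ, hevalgT]) with hφdef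
  have hφξ : φ ξ = αT := AdjoinRoot.lift_root _
  have hφof : ∀ q, φ (ofg q) = χ q := fun q => AdjoinRoot.lift_of _
  -- facts about gL
  have hgLmon : gL.Monic := hgQmon.map _
  have hξroot : gL.IsRoot ξ := by
    rw [IsRoot, hgL, eval_map, hofg, hξdef]
    exact AdjoinRoot.eval₂_root gQ
  set g₁ := gL /ₘ (X - C ξ) with hg₁def
  have hfact₁ : (X - C ξ) * g₁ = gL := mul_divByMonic_eq_iff_isRoot.2 hξroot
  have hg₁mon : g₁.Monic := (monic_X_sub_C ξ).of_mul_monic_left (hfact₁.symm ▸ hgLmon)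
  have hgLdeg : gL.natDegree = k + 1 := by rw [hgL, hgQmon.natDegree_map, hgQdeg]
  have hg₁deg : g₁.natDegree = k := by
    have h5 := congrArg natDegree hfact₁
    rw [(monic_X_sub_C ξ).natDegree_mul hg₁mon, natDegree_X_sub_C, hgLdeg] at h5
    omega
  -- ρ : R' → L
  obtain ⟨c₀, hc₀⟩ := univ_dvd f (k+1)
  have hfL : f.map (ofg.comp (algebraMap R (UniversalFactorRing R f (k+1))))
      = gL * c₀.map ofg := by
    rw [← Polynomial.map_map, hc₀, Polynomial.map_mul, hgL]
  have hrootL : eval₂ (ofg.comp (algebraMap R (UniversalFactorRing R f (k+1)))) ξ f = 0 := by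
    rw [eval₂_eq_eval_map, hfL, eval_mul, show gL.eval ξ = 0 from hξroot, zero_mul]
  set ρ : R' →+* AdjoinRoot gQ :=
    AdjoinRoot.lift (ofg.comp (algebraMap R (UniversalFactorRing R f (k+1)))) ξ hrootL with hρdef
  have hρα : ρ α = ξ := AdjoinRoot.lift_root _
  have hρof : ρ.comp (algebraMap R R')
      = ofg.comp (algebraMap R (UniversalFactorRing R f (k+1))) := by
    rw [hρdef, AdjoinRoot.algebraMap_eq]
    exact AdjoinRoot.lift_comp_of _
  have hfmapρ : fR'.map ρ = gL * c₀.map ofg := by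
    rw [hfR', Polynomial.map_map, hρof, hfL]
  have hdvd₁ : g₁ ∣ f'.map ρ := by
    refine ⟨c₀.map ofg, (monic_X_sub_C ξ).isRegular.left ?_⟩
    show (X - C ξ) * (f'.map ρ) = (X - C ξ) * (g₁ * c₀.map ofg)
    have h6 : (X - C ξ) * (f'.map ρ) = fR'.map ρ := by
      rw [← hfact, Polynomial.map_mul, Polynomial.map_sub, map_X, map_C, hρα]
    rw [h6, hfmapρ, ← mul_assoc, hfact₁]
  -- Ψ0 : R'[b'] → L
  set Ψ0 := MvPolynomial.eval₂Hom ρ (fun j : Fin k => g₁.coeff j) with hΨ0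
  have hΨ0X : ∀ j : Fin k, Ψ0 (MvPolynomial.X j) = g₁.coeff j := fun j => by
    rw [hΨ0, MvPolynomial.eval₂Hom_X']
  have hΨ0C : ∀ r' : R', Ψ0 (MvPolynomial.C r') = ρ r' := fun r' => by
    rw [hΨ0, MvPolynomial.eval₂Hom_C]
  have hmapg₁ : (genericMonic R' k).map Ψ0 = g₁ := by
    rw [genericMonic_map Ψ0]
    conv_rhs => rw [monic_expand hg₁mon hg₁deg]
    congr 1
    exact Finset.sum_congr rfl fun j _ => by rw [hΨ0X]
  have hkerΨ0 : I' ≤ RingHom.ker Ψ0 := by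
    have hrem : ((f'.map (algebraMap R' (MvPolynomial (Fin k) R')) %ₘ genericMonic R' k).map
        Ψ0) = 0 := by
      rw [map_modByMonic Ψ0 (genericMonic_monic R' k), hmapg₁]
      have h7 : (f'.map (algebraMap R' (MvPolynomial (Fin k) R'))).map Ψ0 = f'.map ρ := by
        rw [Polynomial.map_map]
        congr 1
        exact RingHom.ext fun r' => hΨ0C r'
      rw [h7, (modByMonic_eq_zero_iff_dvd hg₁mon).2 hdvd₁]
    rw [hI'def]
    refine Ideal.span_le.2 ?_
    rintro x ⟨i, rfl⟩
    have := congrArg (fun p => p.coeff i) hrem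
    simpa [coeff_map] using this
  set ψ : T →+* AdjoinRoot gQ := Ideal.Quotient.lift I' Ψ0 (fun a ha => hkerΨ0 ha) with hψdef
  have hψmk : ∀ a, ψ (mkI' a) = Ψ0 a := fun a => Ideal.Quotient.lift_mk I' _ _
  have hψαT : ψ αT = ξ := by
    have h8 : αT = mkI' (MvPolynomial.C α) := rfl
    rw [h8, hψmk, hΨ0C, hρα]
  -- ψ ∘ χ = ofg
  have hg'Tψ : g'T.map ψ = g₁ := by
    rw [hg'T, Polynomial.map_map]
    have h12 : ψ.comp mkI' = Ψ0 := RingHom.ext hψmk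
    rw [h12, hmapg₁]
  have hgTψ : gT.map ψ = gL := by
    rw [hgT, Polynomial.map_mul, Polynomial.map_sub, map_X, map_C, hψαT, hg'Tψ, hfact₁]
  have hcoeffgQ : ∀ j : Fin (k+1), gQ.coeff (j:ℕ) = mkI (MvPolynomial.X j) := fun j => by
    rw [hgQ, coeff_map, genericMonic_coeff]
  have hψχ : ψ.comp χ = ofg := by
    apply Ideal.Quotient.ringHom_ext
    apply MvPolynomial.ringHom_ext
    · intro r
      simp only [RingHom.comp_apply]
      rw [hχmk, hχ0C, halgRT, RingHom.comp_apply]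
      have h9 : algebraMap R' T (algebraMap R R' r) = mkI' (MvPolynomial.C (algebraMap R R' r)) :=
        rfl
      rw [h9, hψmk, hΨ0C]
      have h10 := RingHom.congr_fun hρof r
      simp only [RingHom.comp_apply] at h10
      rw [h10]
      rfl
    · intro j
      simp only [RingHom.comp_apply]
      rw [hχmk, hχ0X]
      have h11 : ψ (gT.coeff (j:ℕ)) = (gT.map ψ).coeff (j:ℕ) := (coeff_map _ _).symm
      rw [h11, hgTψ, hgL, coeff_map, hcoeffgQ j]
  -- ψ ∘ φ = id
  have hE2 : ∀ x : AdjoinRoot gQ, ψ (φ x) = x := by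
    intro x
    obtain ⟨p, rfl⟩ := AdjoinRoot.mk_surjective x
    induction p using Polynomial.induction_on with
    | C q =>
      have h13 : AdjoinRoot.mk gQ (C q) = ofg q := rfl
      rw [h13, hφof]
      exact RingHom.congr_fun hψχ q
    | add p q hp hq => simp only [map_add, hp, hq]
    | monomial n a ih =>
      have h14 : AdjoinRoot.mk gQ (C a * X ^ (n + 1))
          = AdjoinRoot.mk gQ (C a * X ^ n) * AdjoinRoot.mk gQ X := by
        rw [pow_succ, ← mul_assoc, map_mul]
      calc ψ (φ (AdjoinRoot.mk gQ (C a * X ^ (n + 1))))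
          = ψ (φ (AdjoinRoot.mk gQ (C a * X ^ n))) * ψ (φ (AdjoinRoot.mk gQ X)) := by
            rw [h14, map_mul, map_mul]
        _ = AdjoinRoot.mk gQ (C a * X ^ n) * AdjoinRoot.mk gQ X := by
            rw [ih, AdjoinRoot.mk_X, ← hξdef, hφξ, hψαT]
        _ = AdjoinRoot.mk gQ (C a * X ^ (n + 1)) := h14.symm
  -- φ ∘ ρ = algebraMap R' T
  have hφofχ : φ.comp ofg = χ := RingHom.ext hφof
  have hgLφ : gL.map φ = gT := by
    rw [hgL, Polynomial.map_map, hφofχ, hgQχ]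
  have hφρ : ∀ r' : R', φ (ρ r') = algebraMap R' T r' := by
    intro r'
    obtain ⟨p, rfl⟩ := AdjoinRoot.mk_surjective r'
    induction p using Polynomial.induction_on with
    | C r =>
      have h16 : AdjoinRoot.mk f (C r) = algebraMap R R' r := rfl
      have h17 := RingHom.congr_fun hρof r
      simp only [RingHom.comp_apply] at h17
      rw [h16, h17, hφof,
        show (algebraMap R (UniversalFactorRing R f (k+1))) r = mkI (MvPolynomial.C r) from rfl,
        hχmk, hχ0C, halgRT]
      rfl
    | add p q hp hq => simp only [map_add, hp, hq]
    | monomial n a ih =>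
      have h18 : AdjoinRoot.mk f (C a * X ^ (n + 1))
          = AdjoinRoot.mk f (C a * X ^ n) * AdjoinRoot.mk f X := by
        rw [pow_succ, ← mul_assoc, map_mul]
      calc φ (ρ (AdjoinRoot.mk f (C a * X ^ (n + 1))))
          = φ (ρ (AdjoinRoot.mk f (C a * X ^ n))) * φ (ρ (AdjoinRoot.mk f X)) := by
            rw [h18, map_mul, map_mul]
        _ = algebraMap R' T (AdjoinRoot.mk f (C a * X ^ n))
              * algebraMap R' T (AdjoinRoot.mk f X) := by
            rw [ih, AdjoinRoot.mk_X, ← hα, hρα, hφξ, hαT]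
        _ = algebraMap R' T (AdjoinRoot.mk f (C a * X ^ (n + 1))) := by
            rw [← map_mul, ← map_mul, pow_succ, mul_assoc]
  -- φ ∘ ψ = id
  have hg₁φ : g₁.map φ = g'T := by
    rw [hg₁def, map_divByMonic φ (monic_X_sub_C ξ), hgLφ, Polynomial.map_sub, map_X, map_C, hφξ]
    rw [hgT, mul_divByMonic_cancel_left g'T (monic_X_sub_C αT)]
  have hE1 : φ.comp ψ = RingHom.id T := by
    apply Ideal.Quotient.ringHom_ext
    apply MvPolynomial.ringHom_ext
    · intro r'
      simp only [RingHom.comp_apply, RingHom.id_apply]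
      rw [hψmk, hΨ0C, hφρ]
      rfl
    · intro j
      simp only [RingHom.comp_apply, RingHom.id_apply]
      rw [hψmk, hΨ0X]
      have h19 : φ (g₁.coeff (j:ℕ)) = (g₁.map φ).coeff (j:ℕ) := (coeff_map _ _).symm
      rw [h19, hg₁φ, hg'T, coeff_map, genericMonic_coeff]
      rfl
  refine ⟨hQnt, ?_⟩
  refine ⟨AlgEquiv.ofRingEquiv (f := RingEquiv.ofRingHom φ ψ hE1 (RingHom.ext hE2)) ?_⟩
  intro x
  have hx : algebraMap F (AdjoinRoot gQ) x = ofg (mkI (MvPolynomial.C (algebraMap F R x))) := rfl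
  have hx2 : algebraMap F T x = algebraMap R T (algebraMap F R x) := rfl
  show φ (algebraMap F (AdjoinRoot gQ) x) = algebraMap F T x
  rw [hx, hφof, hχmk, hχ0C, hx2]

end Step

section Rank
variable (F : Type*) [Field F]

lemma rank_adjoinRoot {S : Type*} [CommRing S] [Nontrivial S] [Algebra F S]
    {g : S[X]} (hg : g.Monic) :
    Module.rank F (AdjoinRoot g) = (g.natDegree : Cardinal) * Module.rank F S := by
  classical
  let pb := AdjoinRoot.powerBasis' hg
  haveI : Module.Free S (AdjoinRoot g) := Module.Free.of_basis pb.basis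
  have h1 : Module.rank S (AdjoinRoot g) = (g.natDegree : Cardinal) := by
    rw [rank_eq_card_basis pb.basis]
    simp [pb, AdjoinRoot.powerBasis']
  have h2 := rank_mul_rank F S (AdjoinRoot g)
  rw [h1] at h2
  rw [← h2, mul_comm]

lemma cardinal_cancel {a : ℕ} (ha : a ≠ 0) {b c : Cardinal} (h : (a : Cardinal) * b = a * c) :
    b = c := by
  rcases lt_or_ge b Cardinal.aleph0 with hb | hb
  · rcases lt_or_ge c Cardinal.aleph0 with hc | hc
    · obtain ⟨m, rfl⟩ := Cardinal.lt_aleph0.1 hb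
      obtain ⟨m', rfl⟩ := Cardinal.lt_aleph0.1 hc
      rw [← Nat.cast_mul, ← Nat.cast_mul] at h
      have := Nat.cast_injective (R := Cardinal) h
      have : m = m' := by
        have := Nat.eq_of_mul_eq_mul_left (Nat.pos_of_ne_zero ha) this
        exact this
      rw [this]
    · exfalso
      have h1 : (a : Cardinal) * b < Cardinal.aleph0 := by
        obtain ⟨m, rfl⟩ := Cardinal.lt_aleph0.1 hb
        rw [← Nat.cast_mul]
        exact Cardinal.nat_lt_aleph0 _
      have h2 : Cardinal.aleph0 ≤ (a : Cardinal) * c := by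
        refine le_trans hc ?_
        conv_lhs => rw [← one_mul c]
        exact mul_le_mul' (by exact_mod_cast Nat.one_le_iff_ne_zero.2 ha) le_rfl
      rw [h] at h1
      exact absurd h2 (not_le.2 h1)
  · rcases lt_or_ge c Cardinal.aleph0 with hc | hc
    · exfalso
      have h1 : (a : Cardinal) * c < Cardinal.aleph0 := by
        obtain ⟨m, rfl⟩ := Cardinal.lt_aleph0.1 hc
        rw [← Nat.cast_mul]
        exact Cardinal.nat_lt_aleph0 _
      have h2 : Cardinal.aleph0 ≤ (a : Cardinal) * b := by
        refine le_trans hb ?_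
        conv_lhs => rw [← one_mul b]
        exact mul_le_mul' (by exact_mod_cast Nat.one_le_iff_ne_zero.2 ha) le_rfl
      rw [← h] at h1
      exact absurd h2 (not_le.2 h1)
    · have hb' : (a : Cardinal) * b = b :=
        Cardinal.mul_eq_right hb ((Cardinal.nat_lt_aleph0 a).le.trans hb)
          (by exact_mod_cast ha)
      have hc' : (a : Cardinal) * c = c :=
        Cardinal.mul_eq_right hc ((Cardinal.nat_lt_aleph0 a).le.trans hc)
          (by exact_mod_cast ha)
      rw [← hb', ← hc', h]

end Rank

section Base
variable (F : Type*) [Field F] {R : Type*} [CommRing R]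

lemma univRemainderIdeal_zero (f : R[X]) : univRemainderIdeal R f 0 = ⊥ := by
  have hg : genericMonic R 0 = 1 := by
    simp [genericMonic]
  rw [univRemainderIdeal, hg, modByMonic_one]
  simp

lemma rank_k0 [Algebra F R] (f : R[X]) :
    Module.rank F (UniversalFactorRing R f 0) = Module.rank F R := by
  let ε : MvPolynomial (Fin 0) R ≃ₐ[F] R :=
    (MvPolynomial.isEmptyAlgEquiv R (Fin 0)).restrictScalars F
  have hker : RingHom.ker ε.toAlgHom = univRemainderIdeal R f 0 := by
    rw [univRemainderIdeal_zero]
    exact RingHom.ker_coe_equiv ε.toRingEquiv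
  let e0 := Ideal.quotientKerAlgEquivOfSurjective (f := ε.toAlgHom) ε.surjective
  let e1 : UniversalFactorRing R f 0 ≃ₐ[F] MvPolynomial (Fin 0) R ⧸ RingHom.ker ε.toAlgHom :=
    Ideal.quotientEquivAlgOfEq F hker.symm
  exact (e1.trans e0).toLinearEquiv.rank_eq

lemma rank_big [Nontrivial R] [Algebra F R] {f : R[X]} (hf : f.Monic) {k : ℕ}
    (hk : f.natDegree < k) : Subsingleton (UniversalFactorRing R f k) := by
  set A := MvPolynomial (Fin k) R
  set fA := f.map (algebraMap R A) with hfA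
  have hfAmon : fA.Monic := hf.map _
  have hdeg : fA.degree < (genericMonic R k).degree := by
    rw [genericMonic_degree]
    have h1 : fA.degree ≤ (f.natDegree : WithBot ℕ) :=
      le_trans degree_map_le degree_le_natDegree
    exact lt_of_le_of_lt h1 (by exact_mod_cast hk)
  have hmod : fA %ₘ genericMonic R k = fA :=
    (modByMonic_eq_self_iff (genericMonic_monic R k)).2 hdeg
  have hone : (1 : A) ∈ univRemainderIdeal R f k := by
    refine Ideal.subset_span ⟨f.natDegree, ?_⟩
    show ((f.map (algebraMap R (MvPolynomial (Fin k) R))) %ₘ genericMonic R k).coeff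
      f.natDegree = 1
    rw [← hfA, hmod, hfA, coeff_map, hf.coeff_natDegree, map_one]
  have htop : univRemainderIdeal R f k = ⊤ := Ideal.eq_top_iff_one _ |>.2 hone
  exact Ideal.Quotient.subsingleton_iff.2 htop

end Base

universe u v

set_option maxHeartbeats 2000000 in
set_option synthInstance.maxHeartbeats 1000000 in
theorem rank_aux (F : Type v) [Field F] : ∀ (k : ℕ) (R : Type u) [CommRing R] [Nontrivial R]
    [Algebra F R] (f : R[X]), f.Monic → ∀ n : ℕ, f.natDegree = n →
    Module.rank F (UniversalFactorRing R f k)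
      = (n.choose k : Cardinal) * Module.rank F R := by
  intro k
  induction k with
  | zero =>
    intro R _ _ _ f hf n hdeg
    rw [Nat.choose_zero_right, Nat.cast_one, one_mul]
    exact rank_k0 F f
  | succ k IH =>
    intro R cR nR aR f hf n hdeg
    rcases lt_or_ge n (k+1) with hkn | hkn
    · haveI := rank_big F hf (show f.natDegree < k+1 by omega)
      rw [rank_subsingleton' F (UniversalFactorRing R f (k+1)),
        Nat.choose_eq_zero_of_lt hkn, Nat.cast_zero, zero_mul]
    · have hn1 : 1 ≤ f.natDegree := by omega
      set R' := AdjoinRoot f with hR'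
      set α := AdjoinRoot.root f with hα
      set fR' := f.map (algebraMap R R') with hfR'
      set f' := fR' /ₘ (X - C α) with hf'
      haveI hR'nt : Nontrivial R' := by
        refine Ideal.Quotient.nontrivial_iff.mpr ?_
        rw [Ne, Ideal.span_singleton_eq_top]
        intro hu
        rw [hf.isUnit_iff] at hu
        rw [hu, natDegree_one] at hn1
        omega
      have hroot : fR'.IsRoot α := by
        rw [IsRoot, hfR', eval_map, AdjoinRoot.algebraMap_eq]
        exact AdjoinRoot.eval₂_root f
      have hfact : (X - C α) * f' = fR' := mul_divByMonic_eq_iff_isRoot.2 hroot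
      have hfR'mon : fR'.Monic := hf.map _
      have hf'mon : f'.Monic := (monic_X_sub_C α).of_mul_monic_left (hfact.symm ▸ hfR'mon)
      have hfR'deg : fR'.natDegree = n := by rw [hfR', hf.natDegree_map, hdeg]
      have hf'deg : f'.natDegree = n - 1 := by
        have h5 := congrArg natDegree hfact
        rw [(monic_X_sub_C α).natDegree_mul hf'mon, natDegree_X_sub_C, hfR'deg] at h5
        omega
      have hrankR' : Module.rank F R' = (n : Cardinal) * Module.rank F R := by
        have h6 := rank_adjoinRoot F (S := R) hf
        rw [hdeg] at h6
        exact h6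
      have hIH := IH R' f' hf'mon (n-1) hf'deg
      haveI hTnt : Nontrivial (UniversalFactorRing R' f' k) := by
        by_contra hcon
        rw [not_nontrivial_iff_subsingleton] at hcon
        rw [rank_subsingleton' F (UniversalFactorRing R' f' k)] at hIH
        have hne : (((n-1).choose k : Cardinal)) * Module.rank F R' ≠ 0 := by
          apply mul_ne_zero
          · have : 0 < (n-1).choose k := Nat.choose_pos (by omega)
            exact_mod_cast Nat.pos_iff_ne_zero.1 this
          · exact ne_of_gt (rank_pos (R := F) (M := R'))
        exact hne hIH.symm
      obtain ⟨hQnt, ⟨e⟩⟩ := step_equiv F f hf hn1 k hTnt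
      haveI := hQnt
      set gQ := (genericMonic R (k+1)).map (Ideal.Quotient.mk (univRemainderIdeal R f (k+1)))
        with hgQdef
      have hgQmon : gQ.Monic := (genericMonic_monic R (k+1)).map _
      have hgQdeg : gQ.natDegree = k+1 := by
        rw [hgQdef, (genericMonic_monic R (k+1)).natDegree_map, genericMonic_natDegree]
      have h1 : Module.rank F (AdjoinRoot gQ)
          = ((k+1 : ℕ) : Cardinal) * Module.rank F (UniversalFactorRing R f (k+1)) := by
        have h7 := rank_adjoinRoot F (S := UniversalFactorRing R f (k+1)) hgQmon
        rw [hgQdeg] at h7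
        exact h7
      have h2 : Module.rank F (AdjoinRoot gQ)
          = Module.rank F (UniversalFactorRing R' f' k) := e.toLinearEquiv.rank_eq
      rw [hIH, hrankR'] at h2
      have h3 : ((k+1 : ℕ) : Cardinal) * Module.rank F (UniversalFactorRing R f (k+1))
          = (((n-1).choose k : ℕ) : Cardinal) * ((n : Cardinal) * Module.rank F R) := by
        rw [← h1, h2]
      have hN : (k+1) * (n.choose (k+1)) = ((n-1).choose k) * n := by
        have hm : n - 1 + 1 = n := by omega
        calc (k+1) * (n.choose (k+1)) = (n.choose (k+1)) * (k+1) := by ring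
          _ = ((n-1+1).choose (k+1)) * (k+1) := by rw [hm]
          _ = (n-1+1) * ((n-1).choose k) := (Nat.add_one_mul_choose_eq (n-1) k).symm
          _ = n * ((n-1).choose k) := by rw [hm]
          _ = ((n-1).choose k) * n := by ring
      have h4 : ((k+1 : ℕ) : Cardinal) * Module.rank F (UniversalFactorRing R f (k+1))
          = ((k+1 : ℕ) : Cardinal) * ((n.choose (k+1) : Cardinal) * Module.rank F R) := by
        rw [h3, ← mul_assoc, ← mul_assoc]
        congr 1
        have := congrArg (fun m : ℕ => (m : Cardinal)) hN
        push_cast at this ⊢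
        rw [← this]
      exact cardinal_cancel (Nat.succ_ne_zero k) h4


set_option maxHeartbeats 2000000 in
set_option synthInstance.maxHeartbeats 1000000 in
/-- Theorem 2.2: if `F` is a field, `R` a nonzero commutative `F`-algebra, and `f ∈ R[x]`
is monic of degree `n`, then for every `k ≥ 0` we have
`dim_F (R_{f,k}) = (n choose k) · dim_F R`. -/
theorem stmt_2 (F : Type*) [Field F] (R : Type*) [CommRing R] [Nontrivial R] [Algebra F R]
    (f : Polynomial R) (hf : f.Monic) (n : ℕ) (hdeg : f.natDegree = n) (k : ℕ) :
    Module.rank F (UniversalFactorRing R f k) = (n.choose k : Cardinal) * Module.rank F R :=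
  rank_aux F k R f hf n hdeg
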